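/- Let f be the function represented by a representing datum normalized at (x₀,i₀). Then for every x with 0 < x ≤ x₀ the left derivative f⁻(x,i₀) exists and τ_{i₀}((0,x)) + t₀ + Σ_{k ≠ i₀} ( τ_k((0,∞)) + b_k ) = p_{i₀} · e^{−θx₀} · ( f(x,i₀)·ψ̃′(x,i₀) − f⁻(x,i₀)·ψ̃(x,i₀) ), where ψ̃′(x,i₀) = (1/p_{i₀})·cosh(θx) − e^{−θx}. -/

import Mathlib

open Filter Topology MeasureTheory

/-- Green function of the Brownian spider with `n` legs, weights `p`, and `θ = √(2r)`. -/
noncomputable def spiderGreen (n : ℕ) (p : Fin n → ℝ) (θ : ℝ)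
    (x : ℝ) (i : Fin n) (y : ℝ) (j : Fin n) : ℝ :=
  if i = j then
    (1/θ) * Real.exp (-θ * max x y) *
      ((1 / p i) * Real.sinh (θ * min x y) + Real.exp (-θ * min x y))
  else (1/θ) * Real.exp (-θ * x) * Real.exp (-θ * y)

/-- The minimal harmonic function `N_k(x,i)` of the Brownian spider attached to the
boundary point `(∞,k)`. -/
noncomputable def spiderN (n : ℕ) (p : Fin n → ℝ) (θ : ℝ) (x : ℝ) (i k : Fin n) : ℝ :=
  if i = k then (1 / p i) * Real.sinh (θ * x) + Real.exp (-θ * x)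
  else Real.exp (-θ * x)

/-- The function `ψ̃(x,i) = (1/θ)((1/p_i)·sinh(θx) + e^{−θx})`. -/
noncomputable def spiderPsiT (n : ℕ) (p : Fin n → ℝ) (θ : ℝ) (x : ℝ) (i : Fin n) : ℝ :=
  (1/θ) * ((1 / p i) * Real.sinh (θ * x) + Real.exp (-θ * x))

/-- Left-sided slope limit from a derivative. -/
lemma left_slope_tendsto {φ : ℝ → ℝ} {x d : ℝ} (h : HasDerivAt φ d x) :
    Tendsto (fun δ => (φ x - φ (x - δ)) / δ) (𝓝[>] (0:ℝ)) (𝓝 d) := by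
  have h1 : Tendsto (fun δ : ℝ => x - δ) (𝓝[>] (0:ℝ)) (𝓝[≠] x) := by
    rw [tendsto_nhdsWithin_iff]
    constructor
    · have : Tendsto (fun δ : ℝ => x - δ) (𝓝 (0:ℝ)) (𝓝 (x - 0)) :=
        (tendsto_const_nhds.sub tendsto_id)
      simpa using this.mono_left nhdsWithin_le_nhds
    · filter_upwards [self_mem_nhdsWithin] with δ (hδ : 0 < δ)
      simp only [Set.mem_compl_iff, Set.mem_singleton_iff]
      intro hc; rw [sub_eq_self] at hc; exact hδ.ne' hc
  have h2 := (hasDerivAt_iff_tendsto_slope.mp h).comp h1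
  refine h2.congr' ?_
  filter_upwards [self_mem_nhdsWithin] with δ (hδ : 0 < δ)
  have hδ0 : δ ≠ 0 := ne_of_gt hδ
  simp only [Function.comp_apply, slope_def_field]
  rw [show x - δ - x = -δ by ring, div_neg, ← neg_div, neg_sub]

lemma sinh_le_mul_exp {t : ℝ} (ht : 0 ≤ t) : Real.sinh t ≤ t * Real.exp t := by
  have h1 : 1 - Real.exp (-(2*t)) ≤ 2*t := by
    have := Real.add_one_le_exp (-(2*t)); linarith
  have h2 : Real.exp t - Real.exp (-t) = Real.exp t * (1 - Real.exp (-(2*t))) := by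
    rw [mul_sub, mul_one, ← Real.exp_add]; ring_nf
  have h3 : Real.exp t * (1 - Real.exp (-(2*t))) ≤ Real.exp t * (2*t) :=
    mul_le_mul_of_nonneg_left h1 (Real.exp_pos t).le
  rw [Real.sinh_eq]
  nlinarith [Real.exp_pos t]

lemma alg_aux (A X Y R D : ℝ) (hX : X ≠ 0) (hY : Y ≠ 0) (hR : R ≠ 0)
    (hD : D = A * ((Y - Y⁻¹)/2) + Y⁻¹) (hD0 : D ≠ 0) :
    (A*((X - X⁻¹)/2) + X⁻¹) * (Y⁻¹/(R⁻¹ * D)) - R * X⁻¹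
      = -(R * A * ((Y*X⁻¹ - (Y*X⁻¹)⁻¹)/2) / D) := by
  rw [mul_inv_rev, inv_inv]
  field_simp
  rw [hD]
  field_simp
  ring

/-- The key algebraic identity behind the error term. -/
lemma spider_key_alg (A θ ξ y x₀ : ℝ)
    (hNy : A * Real.sinh (θ*y) + Real.exp (-θ*y) ≠ 0) :
    (A * Real.sinh (θ*ξ) + Real.exp (-θ*ξ)) *
        (Real.exp (-θ*y) / (Real.exp (-θ*x₀) * (A*Real.sinh (θ*y)+Real.exp (-θ*y))))
      - Real.exp (θ*x₀) * Real.exp (-θ*ξ)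
    = -(Real.exp (θ*x₀) * A * Real.sinh (θ*(y-ξ)) /
        (A*Real.sinh (θ*y)+Real.exp (-θ*y))) := by
  have e1 : Real.exp (θ*(y-ξ)) = Real.exp (θ*y) * (Real.exp (θ*ξ))⁻¹ := by
    rw [← Real.exp_neg, ← Real.exp_add]; ring_nf
  have e2 : Real.exp (-(θ*(y-ξ))) = (Real.exp (θ*y))⁻¹ * Real.exp (θ*ξ) := by
    rw [← Real.exp_neg, ← Real.exp_add]; ring_nf
  simp only [Real.sinh_eq, neg_mul, Real.exp_neg] at hNy ⊢
  rw [e1]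
  exact alg_aux A _ _ _ _ (Real.exp_ne_zero _) (Real.exp_ne_zero _) (Real.exp_ne_zero _) rfl hNy

set_option maxHeartbeats 1600000

/-- for a function `f` represented by a representing datum normalized at
`(x₀,i₀)`, for every `0 < x ≤ x₀` the left derivative `f⁻(x,i₀)` exists and
`τ_{i₀}((0,x)) + t₀ + Σ_{k ≠ i₀}(τ_k((0,∞)) + b_k)
  = p_{i₀}·e^{−θx₀}·(f(x,i₀)·ψ̃′(x,i₀) − f⁻(x,i₀)·ψ̃(x,i₀))`,
where `ψ̃′(x,i₀) = (1/p_{i₀})·cosh(θx) − e^{−θx}`. -/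
theorem stmt_12 (n : ℕ) (hn : 1 ≤ n) (p : Fin n → ℝ)
    (hp : ∀ i, 0 < p i) (hpsum : ∑ i, p i = 1)
    (r : ℝ) (hr : 0 < r) (θ : ℝ) (hθ : θ = Real.sqrt (2 * r))
    (x₀ : ℝ) (hx₀ : 0 < x₀) (i₀ : Fin n)
    (τ : Fin n → Measure ℝ) [∀ k, IsFiniteMeasure (τ k)]
    (hτsupp : ∀ k, τ k (Set.Iic 0) = 0)
    (b : Fin n → ℝ) (hb : ∀ k, 0 ≤ b k) (t₀ : ℝ) (ht₀ : 0 ≤ t₀)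
    (hnorm : t₀ + ∑ k, ((τ k (Set.Ioi 0)).toReal + b k) = 1)
    (f : ℝ → Fin n → ℝ)
    (hf : ∀ x i, f x i = t₀ * Real.exp (-θ * (x - x₀)) +
      ∑ k, ((∫ y in Set.Ioi (0:ℝ),
          spiderGreen n p θ x i y k / spiderGreen n p θ x₀ i₀ y k ∂(τ k)) +
        b k * (spiderN n p θ x i k / spiderN n p θ x₀ i₀ k))) :
    ∀ x, 0 < x → x ≤ x₀ → ∃ d : ℝ,
      Tendsto (fun δ => (f x i₀ - f (x - δ) i₀) / δ) (𝓝[>] 0) (𝓝 d) ∧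
      (τ i₀ (Set.Ioo 0 x)).toReal + t₀ +
          ∑ k ∈ Finset.univ.erase i₀, ((τ k (Set.Ioi 0)).toReal + b k) =
        p i₀ * Real.exp (-θ * x₀) *
          (f x i₀ * ((1 / p i₀) * Real.cosh (θ * x) - Real.exp (-θ * x)) -
            d * spiderPsiT n p θ x i₀) := by
  intro x hx hxx0
  have hθ0 : 0 < θ := by rw [hθ]; exact Real.sqrt_pos.mpr (by linarith)
  have hpi : (0:ℝ) < p i₀ := hp i₀
  set μ := τ i₀ with hμdef
  set N : ℝ → ℝ := fun t => (1 / p i₀) * Real.sinh (θ * t) + Real.exp (-θ * t) with hNdef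
  have hNpos : ∀ t, 0 ≤ t → 0 < N t := by
    intro t ht
    have h1 : 0 ≤ (1 / p i₀) * Real.sinh (θ * t) :=
      mul_nonneg (by positivity) (Real.sinh_nonneg_iff.mpr (mul_nonneg hθ0.le ht))
    have h2 := Real.exp_pos (-θ * t)
    simp only [hNdef]; linarith
  have hNlb : ∀ t, 0 ≤ t → t ≤ x₀ → Real.exp (-θ * x₀) ≤ N t := by
    intro t ht htx
    have h1 : Real.exp (-θ*x₀) ≤ Real.exp (-θ*t) := Real.exp_le_exp.mpr (by nlinarith)
    have h2 : 0 ≤ (1 / p i₀) * Real.sinh (θ * t) :=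
      mul_nonneg (by positivity) (Real.sinh_nonneg_iff.mpr (mul_nonneg hθ0.le ht))
    simp only [hNdef]; linarith
  have hNexple : ∀ t, 0 ≤ t → Real.exp (-θ*t) ≤ N t := by
    intro t ht
    have h2 : 0 ≤ (1 / p i₀) * Real.sinh (θ * t) :=
      mul_nonneg (by positivity) (Real.sinh_nonneg_iff.mpr (mul_nonneg hθ0.le ht))
    simp only [hNdef]; linarith
  set hfun : ℝ → ℝ :=
    fun y => Real.exp (-θ * y) / (Real.exp (-θ * max y x₀) * N (min y x₀)) with hhdef
  -- Green-function ratio evaluations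
  have hGdiag : ∀ u y : ℝ, spiderGreen n p θ u i₀ y i₀
      = (1/θ) * Real.exp (-θ * max u y) * N (min u y) := by
    intro u y; simp [spiderGreen, hNdef]
  have hexpmul : ∀ u v : ℝ, Real.exp (-θ*u) / Real.exp (-θ*v)
      = Real.exp (θ*v) * Real.exp (-θ*u) := by
    intro u v
    rw [← Real.exp_sub, ← Real.exp_add]; ring_nf
  have hG1 : ∀ ξ y : ℝ, 0 < y → y ≤ ξ → ξ ≤ x₀ →
      spiderGreen n p θ ξ i₀ y i₀ / spiderGreen n p θ x₀ i₀ y i₀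
        = Real.exp (θ * x₀) * Real.exp (-θ * ξ) := by
    intro ξ y hy hyξ hξ
    rw [hGdiag, hGdiag, max_eq_left hyξ, min_eq_right hyξ,
      max_eq_left (hyξ.trans hξ), min_eq_right (hyξ.trans hξ)]
    have hNy := (hNpos y hy.le).ne'
    rw [show (1/θ) * Real.exp (-θ*ξ) * N y / ((1/θ) * Real.exp (-θ*x₀) * N y)
        = Real.exp (-θ*ξ) / Real.exp (-θ*x₀) by
      field_simp]
    exact hexpmul ξ x₀
  have hG2 : ∀ ξ y : ℝ, 0 < ξ → ξ ≤ y →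
      spiderGreen n p θ ξ i₀ y i₀ / spiderGreen n p θ x₀ i₀ y i₀ = N ξ * hfun y := by
    intro ξ y h0 hξy
    have hy : 0 < y := lt_of_lt_of_le h0 hξy
    rw [hGdiag, hGdiag, max_eq_right hξy, min_eq_left hξy, max_comm x₀ y, min_comm x₀ y]
    have hmin : 0 < min y x₀ := lt_min hy hx₀
    have hN1 := (hNpos _ hmin.le).ne'
    simp only [hhdef]
    field_simp
  have hGoff : ∀ k, i₀ ≠ k → ∀ ξ y : ℝ,
      spiderGreen n p θ ξ i₀ y k / spiderGreen n p θ x₀ i₀ y k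
        = Real.exp (θ * x₀) * Real.exp (-θ * ξ) := by
    intro k hk ξ y
    rw [spiderGreen, spiderGreen, if_neg hk, if_neg hk]
    rw [show (1/θ) * Real.exp (-θ*ξ) * Real.exp (-θ*y)
        / ((1/θ) * Real.exp (-θ*x₀) * Real.exp (-θ*y))
        = Real.exp (-θ*ξ) / Real.exp (-θ*x₀) by field_simp]
    exact hexpmul ξ x₀
  have hNoff : ∀ k, i₀ ≠ k → ∀ ξ : ℝ, spiderN n p θ ξ i₀ k / spiderN n p θ x₀ i₀ k
      = Real.exp (θ * x₀) * Real.exp (-θ * ξ) := by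
    intro k hk ξ
    rw [spiderN, spiderN, if_neg hk, if_neg hk]
    exact hexpmul ξ x₀
  have hNon : ∀ ξ : ℝ, spiderN n p θ ξ i₀ i₀ = N ξ := by
    intro ξ; simp [spiderN, hNdef]
  -- properties of hfun
  have hhnonneg : ∀ y : ℝ, 0 < y → 0 ≤ hfun y := by
    intro y hy
    simp only [hhdef]
    exact div_nonneg (Real.exp_pos _).le
      (mul_nonneg (Real.exp_pos _).le (hNpos _ (lt_min hy hx₀).le).le)
  set Cb : ℝ := Real.exp (θ*x₀) * Real.exp (θ*x₀) + 1 / N x₀ with hCbdef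
  have hRR : Real.exp (θ*x₀) * Real.exp (-θ*x₀) = 1 := by
    rw [← Real.exp_add]; ring_nf; exact Real.exp_zero
  have hhble : ∀ y : ℝ, 0 < y → hfun y ≤ Cb := by
    intro y hy
    by_cases hyx : y ≤ x₀
    · have hNy := hNpos y hy.le
      simp only [hhdef]
      rw [max_eq_right hyx, min_eq_left hyx, hCbdef]
      rw [div_le_iff₀ (by positivity)]
      have h1 : Real.exp (-θ*y) ≤ N y := hNexple y hy.le
      have h2 : (1:ℝ) ≤ Real.exp (θ*x₀) := Real.one_le_exp (by positivity)
      have h3 : 0 < Real.exp (-θ*x₀) := Real.exp_pos _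
      have h4 : 0 ≤ 1 / N x₀ := by positivity
      have h5 : Real.exp (θ*x₀) * Real.exp (θ*x₀) * (Real.exp (-θ*x₀) * N y)
          = Real.exp (θ*x₀) * N y := by
        linear_combination (Real.exp (θ*x₀) * N y) * hRR
      calc Real.exp (-θ*y) ≤ N y := h1
        _ = 1 * N y := (one_mul _).symm
        _ ≤ Real.exp (θ*x₀) * N y := mul_le_mul_of_nonneg_right h2 hNy.le
        _ = Real.exp (θ*x₀) * Real.exp (θ*x₀) * (Real.exp (-θ*x₀) * N y) := h5.symm
        _ ≤ (Real.exp (θ*x₀) * Real.exp (θ*x₀) + 1 / N x₀) * (Real.exp (-θ*x₀) * N y) := by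
            rw [add_mul]; linarith [mul_nonneg h4 (mul_nonneg h3.le hNy.le)]
    · push_neg at hyx
      have hNy := hNpos x₀ hx₀.le
      simp only [hhdef]
      rw [max_eq_left hyx.le, min_eq_right hyx.le, hCbdef]
      rw [show Real.exp (-θ*y) / (Real.exp (-θ*y) * N x₀) = 1 / N x₀ by
        field_simp]
      have : 0 < Real.exp (θ*x₀) * Real.exp (θ*x₀) := by positivity
      linarith
  have hhcont : ContinuousOn hfun (Set.Ioi (0:ℝ)) := by
    simp only [hhdef]
    apply ContinuousOn.div
    · exact (Real.continuous_exp.comp (continuous_const.mul continuous_id)).continuousOn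
    · apply Continuous.continuousOn
      apply Continuous.mul
      · exact Real.continuous_exp.comp (continuous_const.mul (continuous_id.max continuous_const))
      · simp only [hNdef]
        apply Continuous.add
        · exact continuous_const.mul (Real.continuous_sinh.comp
            (continuous_const.mul (continuous_id.min continuous_const)))
        · exact Real.continuous_exp.comp (continuous_const.mul
            (continuous_id.min continuous_const))
    · intro y hy
      have hmin : 0 < min y x₀ := lt_min hy hx₀
      exact mul_ne_zero (Real.exp_ne_zero _) (hNpos _ hmin.le).ne'
  have hInt : ∀ s : Set ℝ, MeasurableSet s → s ⊆ Set.Ioi 0 → IntegrableOn hfun s μ := by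
    intro s hs hsub
    refine Integrable.mono' (integrable_const Cb)
      ((hhcont.mono hsub).aestronglyMeasurable hs) ?_
    refine (ae_restrict_iff' hs).mpr (ae_of_all _ fun y hy => ?_)
    have hy0 := hsub hy
    rw [Real.norm_eq_abs, abs_of_nonneg (hhnonneg y hy0)]
    exact hhble y hy0
  set S : ℝ := t₀ + ∑ k ∈ Finset.univ.erase i₀, ((τ k (Set.Ioi 0)).toReal + b k) with hS
  -- closed form for f on (0, x₀]
  have keyf : ∀ ξ, 0 < ξ → ξ ≤ x₀ → f ξ i₀
      = Real.exp (θ*x₀) * Real.exp (-θ*ξ) * (S + (μ (Set.Ioc 0 ξ)).toReal)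
        + N ξ * (b i₀ / N x₀ + ∫ y in Set.Ioi ξ, hfun y ∂μ) := by
    intro ξ hξ0 hξx₀
    have hdisj : Disjoint (Set.Ioc (0:ℝ) ξ) (Set.Ioi ξ) := Set.Ioc_disjoint_Ioi le_rfl
    have hIOn1 : IntegrableOn
        (fun y => spiderGreen n p θ ξ i₀ y i₀ / spiderGreen n p θ x₀ i₀ y i₀)
        (Set.Ioc 0 ξ) μ := by
      refine IntegrableOn.congr_fun
        ((integrableOn_const_iff).mpr (Or.inr (measure_lt_top _ _)))
        (fun y hy => (hG1 ξ y hy.1 hy.2 hξx₀).symm) measurableSet_Ioc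
    have hIOn2 : IntegrableOn
        (fun y => spiderGreen n p θ ξ i₀ y i₀ / spiderGreen n p θ x₀ i₀ y i₀)
        (Set.Ioi ξ) μ := by
      refine IntegrableOn.congr_fun
        (((hInt _ measurableSet_Ioi (Set.Ioi_subset_Ioi hξ0.le)).const_mul (N ξ)))
        (fun y hy => (hG2 ξ y hξ0 (le_of_lt hy)).symm) measurableSet_Ioi
    have hIG : (∫ y in Set.Ioi (0:ℝ),
        spiderGreen n p θ ξ i₀ y i₀ / spiderGreen n p θ x₀ i₀ y i₀ ∂μ)
        = Real.exp (θ*x₀) * Real.exp (-θ*ξ) * (μ (Set.Ioc 0 ξ)).toReal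
          + N ξ * ∫ y in Set.Ioi ξ, hfun y ∂μ := by
      rw [show (Set.Ioi (0:ℝ)) = Set.Ioc 0 ξ ∪ Set.Ioi ξ
          from (Set.Ioc_union_Ioi_eq_Ioi hξ0.le).symm]
      rw [setIntegral_union hdisj measurableSet_Ioi hIOn1 hIOn2]
      rw [setIntegral_congr_fun measurableSet_Ioc (fun y hy => hG1 ξ y hy.1 hy.2 hξx₀),
        setIntegral_const,
        setIntegral_congr_fun measurableSet_Ioi (fun y hy => hG2 ξ y hξ0 (le_of_lt hy)),
        integral_const_mul]
      simp [smul_eq_mul, measureReal_def]; ring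
    have hterm : ∀ k ∈ Finset.univ.erase i₀,
        ((∫ y in Set.Ioi (0:ℝ),
          spiderGreen n p θ ξ i₀ y k / spiderGreen n p θ x₀ i₀ y k ∂(τ k))
          + b k * (spiderN n p θ ξ i₀ k / spiderN n p θ x₀ i₀ k))
        = ((τ k (Set.Ioi 0)).toReal + b k) * (Real.exp (θ*x₀) * Real.exp (-θ*ξ)) := by
      intro k hk
      have hki : i₀ ≠ k := (Finset.ne_of_mem_erase hk).symm
      rw [hNoff k hki ξ]
      rw [show (fun y => spiderGreen n p θ ξ i₀ y k / spiderGreen n p θ x₀ i₀ y k)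
          = fun _ : ℝ => Real.exp (θ*x₀) * Real.exp (-θ*ξ)
          from funext fun y => hGoff k hki ξ y]
      rw [setIntegral_const]
      simp only [smul_eq_mul, measureReal_def]; ring
    rw [hf ξ i₀, ← Finset.add_sum_erase _ _ (Finset.mem_univ i₀),
      Finset.sum_congr rfl hterm, hIG, hNon, hNon, ← Finset.sum_mul]
    rw [show Real.exp (-θ*(ξ - x₀)) = Real.exp (θ*x₀) * Real.exp (-θ*ξ) by
      rw [← Real.exp_add]; ring_nf]
    rw [hS]; ring
  -- closed form at x
  set Am : ℝ := Real.exp (θ*x₀) * (S + (μ (Set.Ioo 0 x)).toReal) with hAm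
  set Bm : ℝ := b i₀ / N x₀ + ∫ y in Set.Ici x, hfun y ∂μ with hBm
  set φ : ℝ → ℝ := fun t => Am * Real.exp (-θ*t) + Bm * N t with hφ
  have hNhx : N x * hfun x = Real.exp (θ*x₀) * Real.exp (-θ*x) := by
    simp only [hhdef]
    rw [max_eq_right hxx0, min_eq_left hxx0]
    have hNx := (hNpos x hx.le).ne'
    rw [show N x * (Real.exp (-θ*x) / (Real.exp (-θ*x₀) * N x))
        = Real.exp (-θ*x) / Real.exp (-θ*x₀) by field_simp]
    exact hexpmul x x₀
  have hfx : f x i₀ = φ x := by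
    have hmeasx : (μ (Set.Ioc 0 x)).toReal
        = (μ (Set.Ioo 0 x)).toReal + (μ {x}).toReal := by
      rw [← Set.Ioo_union_right hx,
        measure_union (Set.disjoint_singleton_right.mpr (by simp)) (measurableSet_singleton x),
        ENNReal.toReal_add (measure_ne_top μ _) (measure_ne_top μ _)]
    have hIci : (∫ y in Set.Ici x, hfun y ∂μ)
        = hfun x * (μ {x}).toReal + ∫ y in Set.Ioi x, hfun y ∂μ := by
      rw [← Set.Ioi_insert, Set.insert_eq,
        setIntegral_union (Set.disjoint_singleton_left.mpr (by simp)) measurableSet_Ioi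
          (hInt _ (measurableSet_singleton x) (Set.singleton_subset_iff.mpr hx))
          (hInt _ measurableSet_Ioi (Set.Ioi_subset_Ioi hx.le)),
        integral_singleton]
      simp only [smul_eq_mul, measureReal_def]; ring
    rw [keyf x hx hxx0, hmeasx]
    simp only [hφ, hAm, hBm, hIci]
    linear_combination (-(μ {x}).toReal) * hNhx
  -- closed form at x - δ
  set Efun : ℝ → ℝ := fun δ => N (x-δ) * (∫ y in Set.Ioo (x-δ) x, hfun y ∂μ)
      - Real.exp (θ*x₀) * Real.exp (-θ*(x-δ)) * (μ (Set.Ioo (x-δ) x)).toReal with hEdef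
  have hfξ : ∀ δ : ℝ, 0 < δ → δ < x → f (x - δ) i₀ = φ (x - δ) + Efun δ := by
    intro δ hδ hδx
    have h0 : 0 < x - δ := by linarith
    have hle : x - δ ≤ x₀ := by linarith
    have hmeas : (μ (Set.Ioc 0 (x-δ))).toReal
        = (μ (Set.Ioo 0 x)).toReal - (μ (Set.Ioo (x-δ) x)).toReal := by
      have hu : Set.Ioc 0 (x-δ) ∪ Set.Ioo (x-δ) x = Set.Ioo 0 x :=
        Set.Ioc_union_Ioo_eq_Ioo h0.le (by linarith)
      have hd : Disjoint (Set.Ioc (0:ℝ) (x-δ)) (Set.Ioo (x-δ) x) :=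
        Set.disjoint_left.mpr fun y h1 h2 => absurd h1.2 (not_le.mpr h2.1)
      rw [← hu, measure_union hd measurableSet_Ioo,
        ENNReal.toReal_add (measure_ne_top μ _) (measure_ne_top μ _)]
      ring
    have hint : (∫ y in Set.Ioi (x-δ), hfun y ∂μ)
        = (∫ y in Set.Ioo (x-δ) x, hfun y ∂μ) + ∫ y in Set.Ici x, hfun y ∂μ := by
      have hd2 : Disjoint (Set.Ioo (x-δ) x) (Set.Ici x) :=
        Set.disjoint_left.mpr fun y h1 h2 => absurd h2 (not_le.mpr h1.2)
      have hEq := setIntegral_union (f := hfun) (μ := μ) hd2 measurableSet_Ici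
        (hInt _ measurableSet_Ioo (fun y hy => h0.trans hy.1))
        (hInt _ measurableSet_Ici (fun y hy => lt_of_lt_of_le hx hy))
      rw [Set.Ioo_union_Ici_eq_Ioi (show x-δ < x by linarith)] at hEq
      exact hEq
    rw [keyf _ h0 hle, hmeas, hint]
    simp only [hφ, hAm, hBm, hEdef]
    ring
  -- the error term bound
  set C : ℝ := Real.exp (θ*x₀) * Real.exp (θ*x₀) * (1/p i₀) * (θ * Real.exp θ) with hCdef
  have hCpos : 0 ≤ C := by positivity
  have hpt : ∀ δ : ℝ, 0 < δ → δ < x → ∀ y ∈ Set.Ioo (x-δ) x,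
      N (x-δ) * hfun y - Real.exp (θ*x₀) * Real.exp (-θ*(x-δ))
        = -(Real.exp (θ*x₀) * (1/p i₀) * Real.sinh (θ*(y-(x-δ))) / N y) := by
    intro δ hδ hδx y hy
    have hy0 : 0 < y := by have := hy.1; linarith
    have hyx₀ : y ≤ x₀ := by have := hy.2; linarith
    have hNy := (hNpos y hy0.le).ne'
    simp only [hhdef, hNdef]
    rw [max_eq_right hyx₀, min_eq_left hyx₀]
    have := spider_key_alg (1/p i₀) θ (x-δ) y x₀ (by simpa [hNdef] using hNy)
    simpa [hNdef] using this
  have hEle : ∀ δ : ℝ, 0 < δ → δ < x → δ ≤ 1 →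
      |Efun δ| ≤ (C * δ) * (μ (Set.Ioo (x-δ) x)).toReal := by
    intro δ hδ hδx hδ1
    have h0 : 0 < x - δ := by linarith
    have hIOn : IntegrableOn (fun y => N (x-δ) * hfun y
        - Real.exp (θ*x₀) * Real.exp (-θ*(x-δ))) (Set.Ioo (x-δ) x) μ := by
      exact ((hInt _ measurableSet_Ioo (fun y hy => h0.trans hy.1)).const_mul
        (N (x-δ))).sub ((integrableOn_const_iff).mpr (Or.inr (measure_lt_top _ _)))
    have hrw : Efun δ = ∫ y in Set.Ioo (x-δ) x,
        (N (x-δ) * hfun y - Real.exp (θ*x₀) * Real.exp (-θ*(x-δ))) ∂μ := by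
      rw [integral_sub ((hInt _ measurableSet_Ioo (fun y hy => h0.trans hy.1)).const_mul
          (N (x-δ))) ((integrableOn_const_iff).mpr (Or.inr (measure_lt_top _ _))),
        integral_const_mul, setIntegral_const]
      simp only [hEdef, smul_eq_mul, measureReal_def]; ring
    rw [hrw, ← Real.norm_eq_abs]
    refine norm_setIntegral_le_of_norm_le_const (measure_lt_top _ _) ?_
    intro y hy
    rw [Real.norm_eq_abs, hpt δ hδ hδx y hy, abs_neg]
    have hy0 : 0 < y := by have := hy.1; linarith
    have hyx₀ : y ≤ x₀ := by have := hy.2; linarith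
    have hNy := hNpos y hy0.le
    have harg : 0 ≤ θ*(y-(x-δ)) := by
      have := hy.1; have : 0 ≤ y - (x-δ) := by linarith
      positivity
    have hsh : 0 ≤ Real.sinh (θ*(y-(x-δ))) := Real.sinh_nonneg_iff.mpr harg
    rw [abs_of_nonneg (div_nonneg (by positivity) hNy.le)]
    have hshle : Real.sinh (θ*(y-(x-δ))) ≤ θ * δ * Real.exp θ := by
      have h1 : Real.sinh (θ*(y-(x-δ))) ≤ (θ*(y-(x-δ))) * Real.exp (θ*(y-(x-δ))) :=
        sinh_le_mul_exp harg
      have h2 : θ*(y-(x-δ)) ≤ θ*δ := by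
        have := hy.2
        have hyd : y - (x-δ) ≤ δ := by linarith
        exact mul_le_mul_of_nonneg_left hyd hθ0.le
      have h3 : Real.exp (θ*(y-(x-δ))) ≤ Real.exp θ := by
        apply Real.exp_le_exp.mpr
        nlinarith
      have h4 : 0 < Real.exp (θ*(y-(x-δ))) := Real.exp_pos _
      nlinarith
    have hNylb : Real.exp (-θ*x₀) ≤ N y := hNlb y hy0.le hyx₀
    rw [div_le_iff₀ hNy]
    have hmain : Real.exp (θ*x₀) * (1/p i₀) * Real.sinh (θ*(y-(x-δ)))
        ≤ Real.exp (θ*x₀) * (1/p i₀) * (θ * δ * Real.exp θ) := by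
      apply mul_le_mul_of_nonneg_left hshle (by positivity)
    have h6 : C * δ * Real.exp (-θ*x₀) = Real.exp (θ*x₀) * (1/p i₀) * (θ * δ * Real.exp θ) := by
      rw [hCdef]
      linear_combination (Real.exp (θ*x₀) * (1/p i₀) * (θ*δ*Real.exp θ)) * hRR
    have h7 : C * δ * Real.exp (-θ*x₀) ≤ C * δ * N y :=
      mul_le_mul_of_nonneg_left hNylb (by positivity)
    calc Real.exp (θ*x₀) * (1/p i₀) * Real.sinh (θ*(y-(x-δ)))
        ≤ Real.exp (θ*x₀) * (1/p i₀) * (θ * δ * Real.exp θ) := hmain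
      _ = C * δ * Real.exp (-θ*x₀) := h6.symm
      _ ≤ C * δ * N y := h7
  -- measure of shrinking intervals tends to zero
  have hμ0 : Tendsto (fun δ : ℝ => (μ (Set.Ioo (x-δ) x)).toReal) (𝓝[>] 0) (𝓝 0) := by
    have hseq : Tendsto (fun m : ℕ => μ (Set.Ioo (x - 1/(m+1)) x)) atTop (𝓝 0) := by
      have hanti : Antitone (fun m : ℕ => Set.Ioo (x - 1/(m+1:ℝ)) x) := by
        intro a c hac
        apply Set.Ioo_subset_Ioo_left
        have h1 : (1:ℝ)/(c+1) ≤ 1/(a+1) := by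
          apply one_div_le_one_div_of_le (by positivity)
          exact_mod_cast by exact_mod_cast Nat.succ_le_succ hac
        linarith
      have h1 := tendsto_measure_iInter_atTop (μ := μ)
        (s := fun m : ℕ => Set.Ioo (x - 1/(m+1)) x)
        (fun m => measurableSet_Ioo.nullMeasurableSet) hanti ⟨0, measure_ne_top _ _⟩
      have h2 : (⋂ m : ℕ, Set.Ioo (x - 1/(m+1:ℝ)) x) = ∅ := by
        ext y
        simp only [Set.mem_iInter, Set.mem_Ioo, Set.mem_empty_iff_false, iff_false, not_forall]
        by_contra hcon
        push_neg at hcon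
        obtain ⟨m, hm⟩ := exists_nat_one_div_lt (sub_pos.mpr (hcon 0).2)
        have := (hcon m).1
        linarith
      rw [h2] at h1
      simpa [Function.comp_def] using h1
    have henn : Tendsto (fun δ : ℝ => μ (Set.Ioo (x-δ) x)) (𝓝[>] 0) (𝓝 0) := by
      rw [ENNReal.tendsto_nhds_zero]
      intro ε hε
      obtain ⟨m, hm⟩ := (hseq.eventually_lt_const hε).exists
      filter_upwards [Ioo_mem_nhdsGT_of_mem
        (Set.mem_Ico.mpr ⟨le_refl (0:ℝ), by positivity⟩ :
          (0:ℝ) ∈ Set.Ico (0:ℝ) (1/(m+1:ℝ)))] with δ hδ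
      exact le_trans (measure_mono (Set.Ioo_subset_Ioo_left (by linarith [hδ.2]))) hm.le
    have := (ENNReal.tendsto_toReal (by simp : (0:ENNReal) ≠ ⊤)).comp henn
    simpa [Function.comp_def] using this
  -- error term over δ tends to zero
  have hE : Tendsto (fun δ => Efun δ / δ) (𝓝[>] (0:ℝ)) (𝓝 0) := by
    rw [tendsto_zero_iff_abs_tendsto_zero]
    apply squeeze_zero' (Eventually.of_forall fun δ => abs_nonneg _) ?_
      (by simpa using hμ0.const_mul C)
    have hmem : Set.Ioo (0:ℝ) (min x 1) ∈ 𝓝[>] (0:ℝ) :=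
      Ioo_mem_nhdsGT_of_mem (Set.mem_Ico.mpr ⟨le_refl (0:ℝ), lt_min hx one_pos⟩)
    filter_upwards [hmem] with δ hδ
    have hδ0 : 0 < δ := hδ.1
    have hδx : δ < x := lt_of_lt_of_le hδ.2 (min_le_left _ _)
    have hδ1 : δ ≤ 1 := le_of_lt (lt_of_lt_of_le hδ.2 (min_le_right _ _))
    simp only [Function.comp_apply, abs_div, abs_of_pos hδ0]
    rw [div_le_iff₀ hδ0]
    calc |Efun δ| ≤ (C * δ) * (μ (Set.Ioo (x-δ) x)).toReal := hEle δ hδ0 hδx hδ1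
      _ = C * (μ (Set.Ioo (x-δ) x)).toReal * δ := by ring
  -- derivative of φ
  set d : ℝ := Am * (-θ * Real.exp (-θ*x))
      + Bm * ((1/p i₀) * (Real.cosh (θ*x) * θ) + -θ * Real.exp (-θ*x)) with hd
  have hder : HasDerivAt φ d x := by
    have h1 : HasDerivAt (fun t : ℝ => Real.exp (-θ*t)) (-θ * Real.exp (-θ*x)) x := by
      have := (Real.hasDerivAt_exp (-θ*x)).comp x ((hasDerivAt_id x).const_mul (-θ))
      simpa [Function.comp_def, mul_comm] using this
    have h2 : HasDerivAt (fun t : ℝ => Real.sinh (θ*t)) (Real.cosh (θ*x) * θ) x := by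
      have := (Real.hasDerivAt_sinh (θ*x)).comp x ((hasDerivAt_id x).const_mul θ)
      simpa [Function.comp_def] using this
    have h3 : HasDerivAt N ((1/p i₀) * (Real.cosh (θ*x) * θ) + -θ * Real.exp (-θ*x)) x := by
      simp only [hNdef]
      exact (h2.const_mul (1/p i₀)).add h1
    simp only [hφ, hd]
    exact (h1.const_mul Am).add (h3.const_mul Bm)
  have hslope := left_slope_tendsto hder
  have hmain : Tendsto (fun δ => (f x i₀ - f (x - δ) i₀) / δ) (𝓝[>] (0:ℝ)) (𝓝 d) := by
    have hcomb := hslope.sub hE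
    rw [sub_zero] at hcomb
    refine hcomb.congr' ?_
    filter_upwards [Ioo_mem_nhdsGT_of_mem (Set.mem_Ico.mpr ⟨le_refl (0:ℝ), hx⟩)] with δ hδ
    rw [hfx, hfξ δ hδ.1 hδ.2]
    ring
  refine ⟨d, hmain, ?_⟩
  -- final algebraic identity
  have hgoal1 : (τ i₀ (Set.Ioo 0 x)).toReal + t₀ +
      ∑ k ∈ Finset.univ.erase i₀, ((τ k (Set.Ioi 0)).toReal + b k)
      = S + (μ (Set.Ioo 0 x)).toReal := by
    rw [hS, hμdef]; ring
  rw [hgoal1, hfx]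
  simp only [hφ, hd, hAm, spiderPsiT, hNdef]
  have hea : Real.exp (-θ*x) = (Real.exp (θ*x))⁻¹ := by
    rw [neg_mul, Real.exp_neg]
  have hea0 : Real.exp (-θ*x₀) = (Real.exp (θ*x₀))⁻¹ := by
    rw [neg_mul, Real.exp_neg]
  rw [Real.sinh_eq, Real.cosh_eq, Real.exp_neg, hea, hea0]
  have hX := Real.exp_ne_zero (θ*x)
  have hX0 := Real.exp_ne_zero (θ*x₀)
  field_simp
  ring
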